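/- Suppose γ_S(n−1) ≥ C·n^d for all integers n ≥ 1, where C > 0 and d ≥ 1 are real constants. Then every nonempty finite subset D ⊆ Γ satisfies Card(∂_S D) ≥ (C^{1/d}·d/(d+1)^{(d+1)/d}) · Card(D)^{(d−1)/d}. -/

import Mathlib

open Set Filter

/-- The ball of radius `n` in the word metric: elements expressible as a product
of at most `n` elements of `S`. -/
def wordBall {G : Type*} [Group G] (S : Set G) (n : ℕ) : Set G :=
  {x | ∃ l : List G, l.length ≤ n ∧ (∀ s ∈ l, s ∈ S) ∧ l.prod = x}

/-- The growth function `γ_S(n) = Card(B_S(n))`. -/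
noncomputable def growth {G : Type*} [Group G] (S : Set G) (n : ℕ) : ℕ :=
  (wordBall S n).ncard

/-- The word norm `‖x‖_S`. -/
noncomputable def wordNorm {G : Type*} [Group G] (S : Set G) (x : G) : ℕ :=
  sInf {n | x ∈ wordBall S n}

/-- The reverse growth function `φ_S(t) = min {n | γ_S(n) ≥ t}`. -/
noncomputable def phiS {G : Type*} [Group G] (S : Set G) (t : ℝ) : ℕ :=
  sInf {n | t ≤ (growth S n : ℝ)}

/-- The interior boundary `∂_S D`. -/
def intBoundary {G : Type*} [Group G] (S : Set G) (D : Set G) : Set G :=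
  {x ∈ D | ∃ s ∈ S, s * x ∉ D}

/-- The exterior boundary `∂'_S D`. -/
def extBoundary {G : Type*} [Group G] (S : Set G) (D : Set G) : Set G :=
  {x | x ∉ D ∧ ∃ s ∈ S, s * x ∈ D}

lemma wordBall_zero {G : Type*} [Group G] (S : Set G) : wordBall S 0 = {1} := by
  ext x
  constructor
  · rintro ⟨l, hl, -, rfl⟩
    simp [List.length_eq_zero_iff.mp (Nat.le_zero.mp hl)]
  · rintro rfl
    exact ⟨[], by simp⟩

lemma wordBall_finite {G : Type*} [Group G] {S : Set G} (hS : S.Finite) (n : ℕ) :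
    (wordBall S n).Finite := by
  induction n with
  | zero => rw [wordBall_zero]; exact finite_singleton 1
  | succ k ih =>
    have hsub : wordBall S (k+1) ⊆ wordBall S k ∪ ⋃ s ∈ S, (s * ·) '' wordBall S k := by
      rintro x ⟨l, hl, hmem, rfl⟩
      match l with
      | [] => exact Or.inl ⟨[], by simp⟩
      | s :: l' =>
        refine Or.inr (mem_biUnion (hmem s (by simp)) ⟨l'.prod, ⟨l', ?_, fun t ht => hmem t (by simp [ht]), rfl⟩, by simp⟩)
        simpa using Nat.succ_le_succ_iff.mp hl
    exact (ih.union (hS.biUnion fun s _ => ih.image _)).subset hsub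

lemma exists_step (P : ℕ → Prop) : ∀ (m : ℕ), ¬ P 0 → P m → ∃ i, i < m ∧ ¬ P i ∧ P (i+1) := by
  intro m
  induction m with
  | zero => intro h0 hm; exact absurd hm h0
  | succ k ih =>
    intro h0 hm
    by_cases hk : P k
    · obtain ⟨i, hi, h1, h2⟩ := ih h0 hk
      exact ⟨i, hi.trans (Nat.lt_succ_self k), h1, h2⟩
    · exact ⟨k, Nat.lt_succ_self k, hk, hm⟩

open Classical in
lemma card_shift_le {G : Type*} [Group G] (S D : Set G) (hDfin : D.Finite) (n : ℕ) (g : G)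
    (hg : g ∈ wordBall S n) :
    (hDfin.toFinset.filter (fun x => g * x ∉ D)).card ≤ n * (intBoundary S D).ncard := by
  classical
  obtain ⟨l, hlen, hmem, hprod⟩ := hg
  have hbdfin : (intBoundary S D).Finite :=
    hDfin.subset (fun x hx => hx.1)
  have key : (hDfin.toFinset.filter (fun x => g * x ∉ D)).card ≤
      ((Finset.range n) ×ˢ hbdfin.toFinset).card := by
    set Q : G → ℕ → Prop := fun x i => (l.drop i).prod * x ∈ D with hQ
    have hex : ∀ x ∈ hDfin.toFinset.filter (fun x => g * x ∉ D),
        ∃ i, i < l.length ∧ ¬ Q x i ∧ Q x (i+1) := by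
      intro x hx
      rw [Finset.mem_filter, Set.Finite.mem_toFinset] at hx
      refine exists_step (Q x) l.length ?_ ?_
      · simpa [Q, hprod] using hx.2
      · simpa [Q] using hx.1
    set f : G → ℕ × G := fun x =>
      if h : ∃ i, i < l.length ∧ ¬ Q x i ∧ Q x (i+1) then
        (h.choose, (l.drop (h.choose + 1)).prod * x) else (0, 1) with hf
    refine Finset.card_le_card_of_injOn f ?_ ?_
    · intro x hx
      have h := hex x hx
      obtain ⟨hi, hni, hqi⟩ := h.choose_spec
      rw [hf]
      simp only [dif_pos h]
      rw [Finset.mem_coe, Finset.mem_product, Finset.mem_range, Set.Finite.mem_toFinset]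
      refine ⟨lt_of_lt_of_le hi hlen, hqi, l[h.choose], hmem _ (List.getElem_mem hi), ?_⟩
      rw [← mul_assoc]
      have : l[h.choose] * (l.drop (h.choose + 1)).prod = (l.drop h.choose).prod := by
        rw [List.drop_eq_getElem_cons hi, List.prod_cons]
      rw [this]
      exact hni
    · intro x hx y hy hxy
      have h1 := hex x (by simpa using hx)
      have h2 := hex y (by simpa using hy)
      rw [hf] at hxy
      simp only [dif_pos h1, dif_pos h2, Prod.mk.injEq] at hxy
      obtain ⟨hij, hv⟩ := hxy
      rw [hij] at hv
      exact mul_left_cancel hv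
  calc _ ≤ _ := key
    _ = n * hbdfin.toFinset.card := by rw [Finset.card_product, Finset.card_range]
    _ = _ := by rw [Set.ncard_eq_toFinset_card _ hbdfin]

/-- The key counting inequality: `γ(n)·|D| ≤ |D|² + γ(n)·n·|∂D|`. -/
lemma counting {G : Type*} [Group G] (S D : Set G) (hSfin : S.Finite) (hDfin : D.Finite)
    (n : ℕ) :
    growth S n * D.ncard ≤
      D.ncard * D.ncard + growth S n * (n * (intBoundary S D).ncard) := by
  classical
  set Wfin := wordBall_finite hSfin n with hWfin
  set Wf := Wfin.toFinset with hWf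
  set Df := hDfin.toFinset with hDf
  have hgr : growth S n = Wf.card := Set.ncard_eq_toFinset_card _ Wfin
  have hDc : D.ncard = Df.card := Set.ncard_eq_toFinset_card _ hDfin
  rw [hgr, hDc]
  have hswap : ∑ g ∈ Wf, (Df.filter fun x => g * x ∈ D).card
      = ∑ x ∈ Df, (Wf.filter fun g => g * x ∈ D).card := by
    simp_rw [Finset.card_filter]
    exact Finset.sum_comm
  have hin : ∀ x, (Wf.filter fun g => g * x ∈ D).card ≤ Df.card := by
    intro x
    refine Finset.card_le_card_of_injOn (fun g => g * x) ?_ ?_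
    · intro g hg
      rw [Finset.mem_coe, Finset.mem_filter] at hg
      rw [Finset.mem_coe, hDf, Set.Finite.mem_toFinset]
      exact hg.2
    · intro a _ b _ hab
      exact mul_right_cancel hab
  have hout : ∀ g ∈ Wf, (Df.filter fun x => ¬ (g * x ∈ D)).card ≤ n * (intBoundary S D).ncard := by
    intro g hg
    rw [hWf, Set.Finite.mem_toFinset] at hg
    exact card_shift_le S D hDfin n g hg
  calc Wf.card * Df.card = ∑ _g ∈ Wf, Df.card := by rw [Finset.sum_const, smul_eq_mul]
    _ = ∑ g ∈ Wf, ((Df.filter fun x => g * x ∈ D).card + (Df.filter fun x => ¬ (g * x ∈ D)).card) := by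
        refine Finset.sum_congr rfl fun g _ => ?_
        rw [Finset.card_filter_add_card_filter_not]
    _ = (∑ g ∈ Wf, (Df.filter fun x => g * x ∈ D).card)
        + ∑ g ∈ Wf, (Df.filter fun x => ¬ (g * x ∈ D)).card := Finset.sum_add_distrib
    _ ≤ Df.card * Df.card + Wf.card * (n * (intBoundary S D).ncard) := by
        refine add_le_add ?_ ?_
        · rw [hswap]
          calc _ ≤ ∑ _x ∈ Df, Df.card := Finset.sum_le_sum fun x _ => hin x
            _ = Df.card * Df.card := by rw [Finset.sum_const, smul_eq_mul]
        · calc _ ≤ ∑ _g ∈ Wf, n * (intBoundary S D).ncard :=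
              Finset.sum_le_sum hout
            _ = _ := by rw [Finset.sum_const, smul_eq_mul]

theorem stmt_10 {G : Type*} [Group G] [Infinite G] (S : Set G) (hSfin : S.Finite)
    (hSsym : ∀ s ∈ S, s⁻¹ ∈ S) (hSgen : Subgroup.closure S = ⊤)
    (C d : ℝ) (hC : 0 < C) (hd : 1 ≤ d)
    (hgrowth : ∀ n : ℕ, 1 ≤ n → C * (n : ℝ) ^ d ≤ (growth S (n - 1) : ℝ))
    (D : Set G) (hDfin : D.Finite) (hDne : D.Nonempty) :
    ((intBoundary S D).ncard : ℝ) ≥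
      C ^ (1 / d) * d / (d + 1) ^ ((d + 1) / d) * (D.ncard : ℝ) ^ ((d - 1) / d) := by
  classical
  have hd0 : (0:ℝ) < d := lt_of_lt_of_le one_pos hd
  have hd1 : (0:ℝ) < d + 1 := by linarith
  set N : ℝ := (D.ncard : ℝ) with hNdef
  have hN1 : (1:ℝ) ≤ N := by
    have h : 1 ≤ D.ncard := (Set.ncard_pos hDfin).mpr hDne
    rw [hNdef]
    exact_mod_cast h
  have hN0 : (0:ℝ) < N := lt_of_lt_of_le one_pos hN1
  -- C ≤ 1
  have hgr0 : growth S 0 = 1 := by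
    rw [growth, wordBall_zero, Set.ncard_singleton]
  have hC1 : C ≤ 1 := by
    have h := hgrowth 1 le_rfl
    simpa [hgr0, Real.one_rpow] using h
  -- the scale t and the radius n
  set X : ℝ := (d + 1) * N / C with hXdef
  have hX2 : (2:ℝ) ≤ X := by
    rw [hXdef]
    rw [le_div_iff₀ hC]
    nlinarith
  have hX0 : (0:ℝ) < X := by linarith
  set t : ℝ := X ^ (1 / d) with htdef
  have ht0 : 0 < t := Real.rpow_pos_of_pos hX0 _
  have ht1 : 1 < t := by
    rw [htdef]
    rw [Real.one_lt_rpow_iff hX0.le]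
    exact Or.inl ⟨by linarith, by positivity⟩
  have htd : t ^ d = X := by
    rw [htdef, ← Real.rpow_mul hX0.le, one_div, inv_mul_cancel₀ hd0.ne', Real.rpow_one]
  have hceil2 : 2 ≤ ⌈t⌉₊ := by
    have : (1:ℕ) < ⌈t⌉₊ := Nat.lt_ceil.mpr (by exact_mod_cast ht1)
    omega
  set n : ℕ := ⌈t⌉₊ - 1 with hndef
  have hn1 : 1 ≤ n := by omega
  have hnsucc : n + 1 = ⌈t⌉₊ := by omega
  have hnr0 : (0:ℝ) < (n:ℝ) := by exact_mod_cast hn1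
  have hnt : (n:ℝ) ≤ t := by
    have h := Nat.ceil_lt_add_one ht0.le
    have h2 : (n:ℝ) + 1 = (⌈t⌉₊ : ℝ) := by exact_mod_cast hnsucc
    linarith
  have htn : t ≤ (n:ℝ) + 1 := by
    have := Nat.le_ceil t
    rw [← hnsucc] at this
    exact_mod_cast this
  -- growth bound at n
  set γ : ℝ := (growth S n : ℝ) with hγdef
  have hγge : (d + 1) * N ≤ γ := by
    have h := hgrowth (n + 1) (by omega)
    simp only [Nat.add_sub_cancel] at h
    have h2 : X ≤ ((n+1 : ℕ) : ℝ) ^ d := by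
      rw [← htd]
      apply Real.rpow_le_rpow ht0.le (by push_cast; linarith) hd0.le
    have h3 : C * X ≤ C * ((n+1 : ℕ) : ℝ) ^ d := by nlinarith
    have h4 : C * X = (d + 1) * N := by
      rw [hXdef]; field_simp
    rw [← h4, hγdef]
    exact le_trans h3 h
  have hγ0 : 0 < γ := by nlinarith
  -- counting inequality
  set b : ℝ := ((intBoundary S D).ncard : ℝ) with hbdef
  have hb0 : 0 ≤ b := by positivity
  have hcount : γ * N ≤ N * N + γ * ((n:ℝ) * b) := by
    have h := counting S D hSfin hDfin n
    rw [hγdef, hNdef, hbdef]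
    exact_mod_cast h
  -- deduce b ≥ d*N/((d+1)*n)
  have hkey : d * N ≤ (d + 1) * ((n:ℝ) * b) := by
    have h1 : γ * ((d+1) * ((n:ℝ) * b)) ≥ γ * (d * N) := by
      nlinarith [mul_le_mul_of_nonneg_left hcount (by positivity : (0:ℝ) ≤ d + 1)]
    exact le_of_mul_le_mul_left (by linarith) hγ0
  have hb_lower : d * N / ((d + 1) * (n:ℝ)) ≤ b := by
    rw [div_le_iff₀ (by positivity)]
    nlinarith
  -- compare with t
  have hb_lower2 : d * N / ((d + 1) * t) ≤ b := by
    refine le_trans ?_ hb_lower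
    gcongr
  -- final algebraic identity
  have hfinal : C ^ (1 / d) * d / (d + 1) ^ ((d + 1) / d) * N ^ ((d - 1) / d)
      = d * N / ((d + 1) * t) := by
    have e1 : (d + 1) ^ ((d + 1) / d) = (d + 1) * (d + 1) ^ (1 / d) := by
      rw [show (d+1)/d = 1 + 1/d by field_simp, Real.rpow_add hd1, Real.rpow_one]
    have e2 : N ^ ((d - 1) / d) = N / N ^ (1 / d) := by
      rw [show (d-1)/d = 1 - 1/d by field_simp, Real.rpow_sub hN0, Real.rpow_one]
    have e3 : t = (d + 1) ^ (1/d) * N ^ (1/d) / C ^ (1/d) := by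
      rw [htdef, hXdef, Real.div_rpow (by positivity) hC.le, Real.mul_rpow hd1.le hN0.le]
    rw [e1, e2, e3]
    have p1 : (0:ℝ) < (d+1) ^ (1/d) := Real.rpow_pos_of_pos hd1 _
    have p2 : (0:ℝ) < N ^ (1/d) := Real.rpow_pos_of_pos hN0 _
    have p3 : (0:ℝ) < C ^ (1/d) := Real.rpow_pos_of_pos hC _
    field_simp
  rw [ge_iff_le, hfinal]
  exact hb_lower2
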